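/- Let E be a real locally convex topological vector space with dual E*, and T : E ⇉ E*. If the map Γ_T(y) = {x ∈ E : ⟨y*, y − x⟩ ≥ 0 for all y* ∈ T(y)} is a KKM map, then T is quasimonotone: for all (x,x*), (y,y*) ∈ T, max{⟨x*, x − y⟩, ⟨y*, y − x⟩} ≥ 0. -/

import Mathlib

/-- If the map `Γ_T(y) = {x : ⟨y*, y - x⟩ ≥ 0, ∀ y* ∈ T y}` is a KKM map, then
`T` is quasimonotone. -/
theorem gammaT_kkm_implies_quasimonotone {E : Type*} [AddCommGroup E] [Module ℝ E]
    [TopologicalSpace E] [IsTopologicalAddGroup E] [ContinuousSMul ℝ E]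
    [LocallyConvexSpace ℝ E]
    (T : E → Set (E →L[ℝ] ℝ))
    (hKKM : ∀ A : Finset E, (↑A : Set E) ⊆ {x | (T x).Nonempty} →
      convexHull ℝ (↑A : Set E) ⊆
        ⋃ y ∈ A, {x : E | ∀ y' ∈ T y, 0 ≤ y' (y - x)}) :
    ∀ x y (x' y' : E →L[ℝ] ℝ), x' ∈ T x → y' ∈ T y →
      0 ≤ max (x' (x - y)) (y' (y - x)) := by
  classical
  intro x y x' y' hx' hy'
  set z : E := (1/2 : ℝ) • x + (1/2 : ℝ) • y with hz
  have hA : ((({x, y} : Finset E) : Set E)) ⊆ {x | (T x).Nonempty} := by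
    intro a ha
    simp only [Finset.coe_insert, Finset.coe_singleton, Set.mem_insert_iff,
      Set.mem_singleton_iff] at ha
    rcases ha with rfl | rfl
    · exact ⟨x', hx'⟩
    · exact ⟨y', hy'⟩
  have hzmem : z ∈ convexHull ℝ (({x, y} : Finset E) : Set E) := by
    have : z ∈ segment ℝ x y :=
      ⟨1/2, 1/2, by norm_num, by norm_num, by norm_num, rfl⟩
    simpa [Finset.coe_insert, Finset.coe_singleton, ← convexHull_pair] using this
  have hz' := hKKM {x, y} hA hzmem
  simp only [Set.mem_iUnion, Finset.mem_insert, Finset.mem_singleton,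
    Set.mem_setOf_eq] at hz'
  obtain ⟨w, hw, hwmem⟩ := hz'
  have hxz : x - z = (1/2 : ℝ) • (x - y) := by
    rw [hz]; module
  have hyz : y - z = (1/2 : ℝ) • (y - x) := by
    rw [hz]; module
  rcases hw with rfl | rfl
  · have := hwmem x' hx'
    rw [hxz, map_smul, smul_eq_mul] at this
    exact le_max_of_le_left (by linarith [this])
  · have := hwmem y' hy'
    rw [hyz, map_smul, smul_eq_mul] at this
    exact le_max_of_le_right (by linarith [this])
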